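/- Let ABCD be a convex quadrilateral in the Euclidean plane whose diagonals meet at a point O, where A, O, B are not collinear, and let φ = ∠AOB. Then dist A B + dist C D > (φ/π) · (dist A C + dist B D). -/

import Mathlib

open Real EuclideanGeometry

/-- In a triangle, the side opposite an angle `θ` is at least `sin (θ/2)` times the sum of
the adjacent sides. -/
lemma side_ge_sin_half (p q r : EuclideanSpace ℝ (Fin 2)) :
    (dist p q + dist r q) * Real.sin (∠ p q r / 2) ≤ dist p r := by
  set θ := ∠ p q r with hθ
  have hθ0 : 0 ≤ θ := angle_nonneg _ _ _
  have hθπ : θ ≤ π := angle_le_pi _ _ _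
  have hs0 : 0 ≤ Real.sin (θ / 2) :=
    Real.sin_nonneg_of_nonneg_of_le_pi (by linarith) (by linarith [Real.pi_pos])
  have hsq : Real.sin (θ / 2) ^ 2 = 1 / 2 - Real.cos θ / 2 := by
    have h2 : 2 * (θ / 2) = θ := by ring
    rw [Real.sin_sq_eq_half_sub, h2]
  have hlaw := EuclideanGeometry.law_cos p q r
  rw [← hθ] at hlaw
  have hcos := Real.cos_le_one θ
  have hcos' := Real.neg_one_le_cos θ
  have hab : 0 ≤ dist p q := dist_nonneg
  have hcb : 0 ≤ dist r q := dist_nonneg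
  have hpr : 0 ≤ dist p r := dist_nonneg
  nlinarith [sq_nonneg (dist p q - dist r q), sq_nonneg (dist p q + dist r q),
    mul_nonneg (mul_nonneg hab hcb) (sub_nonneg.2 hcos),
    sq_nonneg (dist p r - (dist p q + dist r q) * Real.sin (θ / 2)),
    mul_nonneg hpr (mul_nonneg (add_nonneg hab hcb) hs0)]

/-- For a convex quadrilateral `ABCD` in the plane whose diagonals meet at `O`, with
`φ = ∠AOB`, one has `AB + CD > (φ/π)(AC + BD)`. -/
theorem diagonal_estimate_one (A B C D O : EuclideanSpace ℝ (Fin 2))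
    (hAOC : Sbtw ℝ A O C) (hBOD : Sbtw ℝ B O D)
    (hncol : ¬ Collinear ℝ ({A, O, B} : Set (EuclideanSpace ℝ (Fin 2)))) :
    dist A B + dist C D > (∠ A O B / π) * (dist A C + dist B D) := by
  set φ := ∠ A O B with hφ
  have hφ0 : 0 < φ := angle_pos_of_not_collinear hncol
  have hφπ : φ < π := angle_lt_pi_of_not_collinear hncol
  have hAC : ∠ A O C = π := hAOC.angle₁₂₃_eq_pi
  have hBD : ∠ B O D = π := hBOD.angle₁₂₃_eq_pi
  have hvert : ∠ A O B = ∠ C O D :=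
    angle_eq_angle_of_angle_eq_pi_of_angle_eq_pi hAC hBD
  -- distances along diagonals
  have hdAC : dist A O + dist O C = dist A C := hAOC.wbtw.dist_add_dist
  have hdBD : dist B O + dist O D = dist B D := hBOD.wbtw.dist_add_dist
  -- the two triangle estimates
  have h1 : (dist A O + dist B O) * Real.sin (φ / 2) ≤ dist A B := side_ge_sin_half A O B
  have h2 : (dist C O + dist D O) * Real.sin (φ / 2) ≤ dist C D := by
    have := side_ge_sin_half C O D
    rwa [← hvert, ← hφ] at this
  -- Jordan's inequality, strict
  have hjord : φ / π < Real.sin (φ / 2) := by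
    have := Real.mul_lt_sin (x := φ / 2) (by linarith) (by linarith)
    have hπ : (0:ℝ) < π := Real.pi_pos
    calc φ / π = 2 / π * (φ / 2) := by field_simp
      _ < Real.sin (φ / 2) := this
  -- positivity of the diagonal sum
  have hACpos : 0 < dist A C := dist_pos.2 hAOC.left_ne_right
  have hBDpos : 0 < dist B D := dist_pos.2 hBOD.left_ne_right
  have key : (dist A C + dist B D) * Real.sin (φ / 2) ≤ dist A B + dist C D := by
    have heq : dist A O + dist B O + (dist C O + dist D O) = dist A C + dist B D := by
      rw [dist_comm C O, dist_comm D O]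
      linarith
    rw [← heq, add_mul]
    linarith [add_le_add h1 h2]
  have : (φ / π) * (dist A C + dist B D) < (dist A C + dist B D) * Real.sin (φ / 2) := by
    rw [mul_comm]
    exact mul_lt_mul_of_pos_left hjord (by linarith)
  linarith
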